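/- There exists a first-order formula φ(x) with one free variable over the signature with unary predicates P₁, P₂ and a binary predicate E such that for every 2-featured pointed undirected graph (G, v) (interpreting Pᵢ as {u : f(u)[i] = 1} and E as the symmetric edge relation): G, v ⊨ φ if and only if G is isomorphic (as a featured graph) to the gadgetisation of a strict linear order. -/

import Mathlib

/-- Relation symbols of the signature for `d`-featured graphs:
unary predicates `P i` for `i < d` and a binary predicate `E`. -/
inductive DRels (d : ℕ) : ℕ → Type
  | P : Fin d → DRels d 1
  | E : DRels d 2

/-- The first-order language of `d`-featured graphs. -/
def GLang (d : ℕ) : FirstOrder.Language :=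
  ⟨fun _ => Empty, DRels d⟩
/-- A binary relation is a strict linear order if it is irreflexive, transitive
and total. -/
def IsSLO {V : Type} (E : V → V → Prop) : Prop :=
  (∀ v, ¬ E v v) ∧ (∀ u v w, E u v → E v w → E u w) ∧
  (∀ u v : V, u ≠ v → E u v ∨ E v u)
/-- A `2`-featured undirected graph: finite nonempty vertex set, symmetric edge
relation and feature map into `{0,1}²`. -/
structure UFG where
  V : Type
  [fintypeV : Fintype V]
  nonemptyV : Nonempty V
  E : V → V → Prop
  symm : ∀ x y, E x y → E y x
  f : V → Fin 2 → Bool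

attribute [instance] UFG.fintypeV

/-- A directed graph (finite nonempty vertex set, edge relation). -/
structure DGraph where
  V : Type
  [fintypeV : Fintype V]
  nonemptyV : Nonempty V
  E : V → V → Prop

attribute [instance] DGraph.fintypeV

/-- Vertices of the gadgetisation: three disjoint copies of `V`
(sources `gs v`, sinks `gt v`, identifiers `gi v`). -/
abbrev Gad (V : Type) : Type := V ⊕ V ⊕ V

def gs {V : Type} (v : V) : Gad V := Sum.inl v
def gt {V : Type} (v : V) : Gad V := Sum.inr (Sum.inl v)
def gi {V : Type} (v : V) : Gad V := Sum.inr (Sum.inr v)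

/-- One orientation of the gadgetisation edges. -/
inductive gadE0 {V : Type} (E : V → V → Prop) : Gad V → Gad V → Prop
  | st {v u : V} : E v u → gadE0 E (gs v) (gt u)
  | si (v : V) : gadE0 E (gs v) (gi v)
  | it (v : V) : gadE0 E (gi v) (gt v)

/-- Edges of the gadgetisation (symmetric closure). -/
def gadE {V : Type} (E : V → V → Prop) (x y : Gad V) : Prop :=
  gadE0 E x y ∨ gadE0 E y x

/-- Features of the gadgetisation: `(1,0)` on sources, `(0,1)` on sinks,
`(0,0)` on identifiers. -/
def gadf {V : Type} : Gad V → Fin 2 → Bool :=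
  Sum.elim (fun _ => ![true, false])
    (Sum.elim (fun _ => ![false, true]) (fun _ => ![false, false]))

/-- The gadgetisation of a directed graph as a `2`-featured undirected graph. -/
def gadget (D : DGraph) : UFG where
  V := Gad D.V
  nonemptyV := ⟨gs (Classical.choice D.nonemptyV)⟩
  E := gadE D.E
  symm := fun _ _ h => h.symm
  f := gadf

/-- `≡^{L,c}` : the `L`-turn `2`-pebble `c`-counting back-and-forth equivalence on
pointed `2`-featured undirected graphs. -/
def uequiv (c : ℕ) : (L : ℕ) → (G₁ G₂ : UFG) → G₁.V → G₂.V → Prop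
  | 0, G₁, G₂, v₁, v₂ => G₁.f v₁ = G₂.f v₂
  | L + 1, G₁, G₂, v₁, v₂ =>
      G₁.f v₁ = G₂.f v₂ ∧
      (∀ k, k ≤ c → ∀ u₁ : Fin k → G₁.V, Function.Injective u₁ →
        ∃ u₂ : Fin k → G₂.V, Function.Injective u₂ ∧
          ∀ i, (G₁.E v₁ (u₁ i) ↔ G₂.E v₂ (u₂ i)) ∧ uequiv c L G₁ G₂ (u₁ i) (u₂ i)) ∧
      (∀ k, k ≤ c → ∀ u₂ : Fin k → G₂.V, Function.Injective u₂ →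
        ∃ u₁ : Fin k → G₁.V, Function.Injective u₁ ∧
          ∀ i, (G₁.E v₁ (u₁ i) ↔ G₂.E v₂ (u₂ i)) ∧ uequiv c L G₁ G₂ (u₁ i) (u₂ i))
/-- A `2`-featured undirected graph as a first-order structure for `GLang 2`,
interpreting `P i` by the `i`-th feature and `E` by the (symmetric) edge relation. -/
def ufgStruct (G : UFG) : (GLang 2).Structure G.V where
  funMap := fun e _ => e.elim
  RelMap := fun {_} r x =>
    match r with
    | DRels.P i => G.f (x 0) i = true
    | DRels.E => G.E (x 0) (x 1)

namespace S5
open FirstOrder Language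

abbrev L2 : FirstOrder.Language := GLang 2

instance ufgInst (G : UFG) : L2.Structure G.V := ufgStruct G

@[simp] lemma relMapP (G : UFG) (k : Fin 2) (x : Fin 1 → G.V) :
    Structure.RelMap (L := L2) (DRels.P k) x = (G.f (x 0) k = true) := rfl

@[simp] lemma relMapE (G : UFG) (x : Fin 2 → G.V) :
    Structure.RelMap (L := L2) (DRels.E) x = G.E (x 0) (x 1) := rfl

/-- atom: `P k t` -/
def vP {α : Type} (k : Fin 2) (t : L2.Term α) : L2.Formula α :=
  Relations.formula₁ (DRels.P k) t

/-- atom: `E t₁ t₂` -/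
def vE {α : Type} (t₁ t₂ : L2.Term α) : L2.Formula α :=
  Relations.formula₂ DRels.E t₁ t₂

def SXf {α : Type} (t : L2.Term α) : L2.Formula α := vP 0 t ⊓ (vP 1 t).not
def TXf {α : Type} (t : L2.Term α) : L2.Formula α := (vP 0 t).not ⊓ vP 1 t
def IXf {α : Type} (t : L2.Term α) : L2.Formula α := (vP 0 t).not ⊓ (vP 1 t).not

def P0 (G : UFG) (x : G.V) : Prop := G.f x 0 = true
def P1 (G : UFG) (x : G.V) : Prop := G.f x 1 = true
def SX (G : UFG) (x : G.V) : Prop := P0 G x ∧ ¬ P1 G x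
def TX (G : UFG) (x : G.V) : Prop := ¬ P0 G x ∧ P1 G x
def IX (G : UFG) (x : G.V) : Prop := ¬ P0 G x ∧ ¬ P1 G x

@[simp] lemma realize_vP {G : UFG} {α : Type} (k : Fin 2) (t : L2.Term α) (w : α → G.V) :
    (vP k t).Realize w ↔ G.f (t.realize w) k = true := by
  rw [vP]; exact Formula.realize_rel₁

@[simp] lemma realize_vE {G : UFG} {α : Type} (t₁ t₂ : L2.Term α) (w : α → G.V) :
    (vE t₁ t₂).Realize w ↔ G.E (t₁.realize w) (t₂.realize w) := by
  rw [vE]; exact Formula.realize_rel₂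

@[simp] lemma realize_SXf {G : UFG} {α : Type} (t : L2.Term α) (w : α → G.V) :
    (SXf t).Realize w ↔ SX G (t.realize w) := by
  simp [SXf, SX, P0, P1, Formula.realize_inf, Formula.realize_not]

@[simp] lemma realize_TXf {G : UFG} {α : Type} (t : L2.Term α) (w : α → G.V) :
    (TXf t).Realize w ↔ TX G (t.realize w) := by
  simp [TXf, TX, P0, P1, Formula.realize_inf, Formula.realize_not]

@[simp] lemma realize_IXf {G : UFG} {α : Type} (t : L2.Term α) (w : α → G.V) :
    (IXf t).Realize w ↔ IX G (t.realize w) := by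
  simp [IXf, IX, P0, P1, Formula.realize_inf, Formula.realize_not]

end S5
namespace S5
open FirstOrder Language

/-- The "there is a unique `Y`-neighbour" property. -/
def Uniq (G : UFG) (Xp Yp : G.V → Prop) : Prop :=
  ∀ x, Xp x → ∃ y, (Yp y ∧ G.E x y) ∧ ∀ z, Yp z → G.E x z → z = y

/-- The induced order relation on sources. -/
def hatE (G : UFG) (s s' : G.V) : Prop :=
  ∃ i, ∃ t, IX G i ∧ (TX G t ∧ (G.E s' i ∧ (G.E i t ∧ G.E s t)))

/-- The semantic characterisation of gadgetisations of strict linear orders. -/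
def Phi (G : UFG) : Prop :=
  (∀ x, ¬(P0 G x ∧ P1 G x)) ∧
  ((∀ x y, G.E x y → ¬((P0 G x ↔ P0 G y) ∧ (P1 G x ↔ P1 G y))) ∧
  ((Uniq G (SX G) (IX G)) ∧ ((Uniq G (TX G) (IX G)) ∧ ((Uniq G (IX G) (SX G)) ∧
  ((Uniq G (IX G) (TX G)) ∧
  ((∀ x, SX G x → ¬ hatE G x x) ∧
  ((∀ x y z, SX G x ∧ (SX G y ∧ (SX G z ∧ (hatE G x y ∧ hatE G y z))) → hatE G x z) ∧
  (∀ x y, (SX G x ∧ (SX G y ∧ ¬ (x = y))) → hatE G x y ∨ hatE G y x))))))))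

-- conversion lemmas between function-quantifiers and ordinary quantifiers
lemma fa1 {M : Type} {P : M → Prop} : (∀ x : Fin 1 → M, P (x 0)) ↔ ∀ a, P a :=
  ⟨fun h a => h (fun _ => a), fun h x => h _⟩

lemma fa2 {M : Type} {P : M → M → Prop} :
    (∀ x : Fin 2 → M, P (x 0) (x 1)) ↔ ∀ a b, P a b :=
  ⟨fun h a b => by simpa using h ![a, b], fun h x => h _ _⟩

lemma fa3 {M : Type} {P : M → M → M → Prop} :
    (∀ x : Fin 3 → M, P (x 0) (x 1) (x 2)) ↔ ∀ a b c, P a b c :=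
  ⟨fun h a b c => by simpa using h ![a, b, c], fun h x => h _ _ _⟩

lemma ex1 {M : Type} {P : M → Prop} : (∃ x : Fin 1 → M, P (x 0)) ↔ ∃ a, P a :=
  ⟨fun ⟨x, h⟩ => ⟨_, h⟩, fun ⟨a, h⟩ => ⟨fun _ => a, h⟩⟩

lemma ex2 {M : Type} {P : M → M → Prop} :
    (∃ x : Fin 2 → M, P (x 0) (x 1)) ↔ ∃ a b, P a b :=
  ⟨fun ⟨x, h⟩ => ⟨_, _, h⟩, fun ⟨a, b, h⟩ => ⟨![a, b], by simpa using h⟩⟩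

/-- The formula for `hatE`. -/
noncomputable def hatEf {α : Type} (s s' : L2.Term α) : L2.Formula α :=
  Formula.iExs (Fin 2)
    (IXf (Term.var (Sum.inr 0)) ⊓ (TXf (Term.var (Sum.inr 1)) ⊓
      (vE (s'.relabel Sum.inl) (Term.var (Sum.inr 0)) ⊓
      (vE (Term.var (Sum.inr 0)) (Term.var (Sum.inr 1)) ⊓
       vE (s.relabel Sum.inl) (Term.var (Sum.inr 1))))))

@[simp] lemma realize_hatEf {G : UFG} {α : Type} (s s' : L2.Term α) (w : α → G.V) :
    (hatEf s s').Realize w ↔ hatE G (s.realize w) (s'.realize w) := by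
  rw [hatEf, Formula.realize_iExs]
  simp only [Formula.realize_inf, realize_IXf, realize_TXf, realize_vE, Term.realize_var,
    Term.realize_relabel, Sum.elim_inl, Sum.elim_inr, id_eq, Function.comp]
  rw [hatE]
  constructor
  · rintro ⟨x, h⟩; exact ⟨x 0, x 1, by simpa using h⟩
  · rintro ⟨a, b, h⟩; exact ⟨![a, b], by simpa using h⟩

end S5
namespace S5
open FirstOrder Language

section Conjuncts

/-- variable `j` among `k` bound variables over outer type `β` -/
abbrev bv {β : Type} {k : ℕ} (j : Fin k) : L2.Term (β ⊕ Fin k) := Term.var (Sum.inr j)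

noncomputable def c1 : L2.Formula (Fin 1) :=
  Formula.iAlls (Fin 1) ((vP 0 (bv 0) ⊓ vP 1 (bv 0)).not)

noncomputable def c2 : L2.Formula (Fin 1) :=
  Formula.iAlls (Fin 2)
    ((vE (bv 0) (bv 1)).imp
      ((((vP 0 (bv 0)).iff (vP 0 (bv 1))) ⊓ ((vP 1 (bv 0)).iff (vP 1 (bv 1)))).not))

/-- The uniqueness formula pattern. -/
noncomputable def uniqf (X Y : {α : Type} → L2.Term α → L2.Formula α) : L2.Formula (Fin 1) :=
  Formula.iAlls (Fin 1)
    ((X (bv 0)).imp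
      (Formula.iExs (Fin 1)
        ((Y (bv 0) ⊓ vE ((bv 0 : L2.Term (Fin 1 ⊕ Fin 1)).relabel Sum.inl) (bv 0)) ⊓
          Formula.iAlls (Fin 1)
            ((Y (bv 0)).imp
              ((vE (((bv 0 : L2.Term (Fin 1 ⊕ Fin 1)).relabel Sum.inl).relabel Sum.inl)
                  (bv 0)).imp
                (Term.equal (bv 0)
                  ((bv 0 : L2.Term ((Fin 1 ⊕ Fin 1) ⊕ Fin 1)).relabel Sum.inl)))))))

lemma realize_uniqf {G : UFG} (v : G.V) (X Y : {α : Type} → L2.Term α → L2.Formula α)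
    (Xp Yp : G.V → Prop)
    (hX : ∀ {α : Type} (t : L2.Term α) (w : α → G.V), ((X t).Realize w : Prop) ↔ Xp (t.realize w))
    (hY : ∀ {α : Type} (t : L2.Term α) (w : α → G.V), ((Y t).Realize w : Prop) ↔ Yp (t.realize w)) :
    (uniqf X Y).Realize (fun _ => v) ↔ Uniq G Xp Yp := by
  rw [uniqf, Formula.realize_iAlls, Uniq]
  refine Iff.trans (forall_congr' fun i => ?_) fa1
  rw [Formula.realize_imp, hX]
  simp only [Term.realize_var, Sum.elim_inr, id_eq]
  refine imp_congr_right fun _ => ?_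
  rw [Formula.realize_iExs]
  refine Iff.trans (exists_congr fun y => ?_) ex1
  rw [Formula.realize_inf, Formula.realize_inf, hY, realize_vE, Formula.realize_iAlls]
  simp only [Term.realize_var, Term.realize_relabel, Sum.elim_inl, Sum.elim_inr, id_eq,
    Function.comp]
  refine and_congr Iff.rfl (Iff.trans (forall_congr' fun z => ?_) fa1)
  rw [Formula.realize_imp, Formula.realize_imp, hY, realize_vE, Formula.realize_equal]
  simp [Function.comp]

noncomputable def c3 : L2.Formula (Fin 1) := uniqf SXf IXf
noncomputable def c4 : L2.Formula (Fin 1) := uniqf TXf IXf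
noncomputable def c5 : L2.Formula (Fin 1) := uniqf IXf SXf
noncomputable def c6 : L2.Formula (Fin 1) := uniqf IXf TXf

noncomputable def c7 : L2.Formula (Fin 1) :=
  Formula.iAlls (Fin 1) ((SXf (bv 0)).imp (hatEf (bv 0) (bv 0)).not)

noncomputable def c8 : L2.Formula (Fin 1) :=
  Formula.iAlls (Fin 3)
    ((SXf (bv 0) ⊓ (SXf (bv 1) ⊓ (SXf (bv 2) ⊓ (hatEf (bv 0) (bv 1) ⊓ hatEf (bv 1) (bv 2))))).imp
      (hatEf (bv 0) (bv 2)))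

noncomputable def c9 : L2.Formula (Fin 1) :=
  Formula.iAlls (Fin 2)
    ((SXf (bv 0) ⊓ (SXf (bv 1) ⊓ (Term.equal (bv 0) (bv 1)).not)).imp
      (hatEf (bv 0) (bv 1) ⊔ hatEf (bv 1) (bv 0)))

noncomputable def phi : L2.Formula (Fin 1) :=
  c1 ⊓ (c2 ⊓ (c3 ⊓ (c4 ⊓ (c5 ⊓ (c6 ⊓ (c7 ⊓ (c8 ⊓ c9)))))))

lemma realize_phi (G : UFG) (v : G.V) :
    (phi.Realize (fun _ => v) : Prop) ↔ Phi G := by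
  rw [phi, Phi]
  simp only [Formula.realize_inf]
  refine and_congr ?_ (and_congr ?_ (and_congr ?_ (and_congr ?_ (and_congr ?_
    (and_congr ?_ (and_congr ?_ (and_congr ?_ ?_)))))))
  · rw [c1, Formula.realize_iAlls]
    refine Iff.trans (forall_congr' fun i => ?_) fa1
    simp [P0, P1]
  · rw [c2, Formula.realize_iAlls]
    refine Iff.trans (forall_congr' fun i => ?_) fa2
    simp [P0, P1, Formula.realize_imp, Formula.realize_not, Formula.realize_inf,
      Formula.realize_iff]
  · exact realize_uniqf v _ _ _ _ (fun t w => realize_SXf t w) (fun t w => realize_IXf t w)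
  · exact realize_uniqf v _ _ _ _ (fun t w => realize_TXf t w) (fun t w => realize_IXf t w)
  · exact realize_uniqf v _ _ _ _ (fun t w => realize_IXf t w) (fun t w => realize_SXf t w)
  · exact realize_uniqf v _ _ _ _ (fun t w => realize_IXf t w) (fun t w => realize_TXf t w)
  · rw [c7, Formula.realize_iAlls]
    refine Iff.trans (forall_congr' fun i => ?_) fa1
    simp
  · rw [c8, Formula.realize_iAlls]
    refine Iff.trans (forall_congr' fun i => ?_) fa3
    simp
  · rw [c9, Formula.realize_iAlls]
    refine Iff.trans (forall_congr' fun i => ?_) fa2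
    simp [Formula.realize_imp, Formula.realize_inf, Formula.realize_not, Formula.realize_sup,
      Formula.realize_equal]

end Conjuncts
end S5
namespace S5
open FirstOrder Language

variable {D : DGraph}

lemma gadE_comm {V : Type} {E : V → V → Prop} {x y : Gad V} : gadE E x y ↔ gadE E y x :=
  or_comm

lemma gE_ss {v w : D.V} : ¬ gadE D.E (gs v) (gs w) := by
  rintro (h | h) <;> cases h

lemma gE_tt {v w : D.V} : ¬ gadE D.E (gt v) (gt w) := by
  rintro (h | h) <;> cases h

lemma gE_ii {v w : D.V} : ¬ gadE D.E (gi v) (gi w) := by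
  rintro (h | h) <;> cases h

lemma gE_st {v w : D.V} : gadE D.E (gs v) (gt w) ↔ D.E v w := by
  constructor
  · rintro (h | h) <;> cases h
    assumption
  · exact fun h => Or.inl (gadE0.st h)

lemma gE_si {v w : D.V} : gadE D.E (gs v) (gi w) ↔ v = w := by
  constructor
  · rintro (h | h) <;> cases h
    rfl
  · rintro rfl; exact Or.inl (gadE0.si v)

lemma gE_it {v w : D.V} : gadE D.E (gi v) (gt w) ↔ v = w := by
  constructor
  · rintro (h | h) <;> cases h
    rfl
  · rintro rfl; exact Or.inl (gadE0.it v)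

lemma SX_gadget {x : Gad D.V} : SX (gadget D) x ↔ ∃ v, x = gs v := by
  rcases x with v | v | v <;>
    simp [SX, P0, P1, gadget, gadf, gs, gt, gi]

lemma TX_gadget {x : Gad D.V} : TX (gadget D) x ↔ ∃ v, x = gt v := by
  rcases x with v | v | v <;>
    simp [TX, P0, P1, gadget, gadf, gs, gt, gi]

lemma IX_gadget {x : Gad D.V} : IX (gadget D) x ↔ ∃ v, x = gi v := by
  rcases x with v | v | v <;>
    simp [IX, P0, P1, gadget, gadf, gs, gt, gi]

lemma E_gadget {x y : Gad D.V} : (gadget D).E x y ↔ gadE D.E x y := Iff.rfl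

lemma hatE_gadget {v u : D.V} : hatE (gadget D) (gs v) (gs u) ↔ D.E v u := by
  constructor
  · rintro ⟨i, t, hIi, hTt, h1, h2, h3⟩
    obtain ⟨i', rfl⟩ := IX_gadget.1 hIi
    obtain ⟨t', rfl⟩ := TX_gadget.1 hTt
    rw [E_gadget, gE_si] at h1
    rw [E_gadget, gE_it] at h2
    rw [E_gadget, gE_st] at h3
    subst h1; subst h2; exact h3
  · intro h
    exact ⟨gi u, gt u, IX_gadget.2 ⟨u, rfl⟩, TX_gadget.2 ⟨u, rfl⟩,
      gE_si.2 rfl, gE_it.2 rfl, gE_st.2 h⟩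

lemma phi_gadget (D : DGraph) (h : IsSLO D.E) : Phi (gadget D) := by
  obtain ⟨hirr, htr, htot⟩ := h
  refine ⟨?_, ?_, ?_, ?_, ?_, ?_, ?_, ?_, ?_⟩
  · rintro (x | x | x) <;> simp [P0, P1, gadget, gadf, gs, gt, gi]
  · rintro x y hE hf
    rcases x with x | x | x <;> rcases y with y | y | y <;>
      first
        | exact gE_ss hE
        | exact gE_tt hE
        | exact gE_ii hE
        | simp [P0, P1, gadget, gadf, gs, gt, gi] at hf
  · intro x hx
    obtain ⟨v, rfl⟩ := SX_gadget.1 hx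
    refine ⟨gi v, ⟨IX_gadget.2 ⟨v, rfl⟩, gE_si.2 rfl⟩, ?_⟩
    intro z hz hE
    obtain ⟨w, rfl⟩ := IX_gadget.1 hz
    rw [E_gadget, gE_si] at hE
    rw [hE]
  · intro x hx
    obtain ⟨v, rfl⟩ := TX_gadget.1 hx
    refine ⟨gi v, ⟨IX_gadget.2 ⟨v, rfl⟩, gadE_comm.1 (gE_it.2 rfl)⟩, ?_⟩
    intro z hz hE
    obtain ⟨w, rfl⟩ := IX_gadget.1 hz
    rw [E_gadget, gadE_comm, gE_it] at hE
    rw [hE]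
  · intro x hx
    obtain ⟨v, rfl⟩ := IX_gadget.1 hx
    refine ⟨gs v, ⟨SX_gadget.2 ⟨v, rfl⟩, gadE_comm.1 (gE_si.2 rfl)⟩, ?_⟩
    intro z hz hE
    obtain ⟨w, rfl⟩ := SX_gadget.1 hz
    rw [E_gadget, gadE_comm, gE_si] at hE
    rw [← hE]
  · intro x hx
    obtain ⟨v, rfl⟩ := IX_gadget.1 hx
    refine ⟨gt v, ⟨TX_gadget.2 ⟨v, rfl⟩, gE_it.2 rfl⟩, ?_⟩
    intro z hz hE
    obtain ⟨w, rfl⟩ := TX_gadget.1 hz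
    rw [E_gadget, gE_it] at hE
    rw [← hE]
  · intro x hx
    obtain ⟨v, rfl⟩ := SX_gadget.1 hx
    intro hh
    exact hirr v (hatE_gadget.1 hh)
  · rintro x y z ⟨hx, hy, hz, h1, h2⟩
    obtain ⟨a, rfl⟩ := SX_gadget.1 hx
    obtain ⟨b, rfl⟩ := SX_gadget.1 hy
    obtain ⟨c, rfl⟩ := SX_gadget.1 hz
    exact hatE_gadget.2 (htr _ _ _ (hatE_gadget.1 h1) (hatE_gadget.1 h2))
  · rintro x y ⟨hx, hy, hne⟩
    obtain ⟨a, rfl⟩ := SX_gadget.1 hx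
    obtain ⟨b, rfl⟩ := SX_gadget.1 hy
    have : a ≠ b := fun h => hne (by rw [h])
    rcases htot a b this with h | h
    · exact Or.inl (hatE_gadget.2 h)
    · exact Or.inr (hatE_gadget.2 h)

end S5
namespace S5
open FirstOrder Language

lemma classify (G : UFG) (h0 : ∀ a, ¬(P0 G a ∧ P1 G a)) (x : G.V) :
    SX G x ∨ TX G x ∨ IX G x := by
  unfold SX TX IX
  by_cases ha : P0 G x <;> by_cases hb : P1 G x
  · exact absurd ⟨ha, hb⟩ (h0 x)
  all_goals tauto

lemma phi_to_iso (G : UFG) (h : Phi G) :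
    ∃ D : DGraph, IsSLO D.E ∧ ∃ e : G.V ≃ Gad D.V,
      (∀ x y, G.E x y ↔ gadE D.E (e x) (e y)) ∧ ∀ x, G.f x = gadf (e x) := by
  obtain ⟨h0, h1, h2, h3, h4, h5, h7, h8, h9⟩ := h
  -- totalized choice functions
  have h2' : ∀ a, ∃ b, SX G a → (IX G b ∧ G.E a b) ∧ ∀ c, IX G c → G.E a c → c = b := by
    intro a
    by_cases ha : SX G a
    · obtain ⟨b, hb⟩ := h2 a ha; exact ⟨b, fun _ => hb⟩
    · exact ⟨a, fun ha' => absurd ha' ha⟩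
  choose ι hι using h2'
  have h3' : ∀ a, ∃ b, TX G a → (IX G b ∧ G.E a b) ∧ ∀ c, IX G c → G.E a c → c = b := by
    intro a
    by_cases ha : TX G a
    · obtain ⟨b, hb⟩ := h3 a ha; exact ⟨b, fun _ => hb⟩
    · exact ⟨a, fun ha' => absurd ha' ha⟩
  choose ιT hιT using h3'
  have h4' : ∀ a, ∃ b, IX G a → (SX G b ∧ G.E a b) ∧ ∀ c, SX G c → G.E a c → c = b := by
    intro a
    by_cases ha : IX G a
    · obtain ⟨b, hb⟩ := h4 a ha; exact ⟨b, fun _ => hb⟩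
    · exact ⟨a, fun ha' => absurd ha' ha⟩
  choose sI hsI using h4'
  have h5' : ∀ a, ∃ b, IX G a → (TX G b ∧ G.E a b) ∧ ∀ c, TX G c → G.E a c → c = b := by
    intro a
    by_cases ha : IX G a
    · obtain ⟨b, hb⟩ := h5 a ha; exact ⟨b, fun _ => hb⟩
    · exact ⟨a, fun ha' => absurd ha' ha⟩
  choose tI htI using h5'
  -- inverse identities
  have sι : ∀ s, SX G s → sI (ι s) = s := fun s hs =>
    ((hsI (ι s) (hι s hs).1.1).2 s hs (G.symm _ _ (hι s hs).1.2)).symm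
  have ιs : ∀ i, IX G i → ι (sI i) = i := fun i hi =>
    ((hι (sI i) (hsI i hi).1.1).2 i hi (G.symm _ _ (hsI i hi).1.2)).symm
  have tιT : ∀ t, TX G t → tI (ιT t) = t := fun t ht =>
    ((htI (ιT t) (hιT t ht).1.1).2 t ht (G.symm _ _ (hιT t ht).1.2)).symm
  have ιTt : ∀ i, IX G i → ιT (tI i) = i := fun i hi =>
    ((hιT (tI i) (htI i hi).1.1).2 i hi (G.symm _ _ (htI i hi).1.2)).symm
  -- nonempty source class
  have hSne : ∃ x, SX G x := by
    obtain ⟨x⟩ := G.nonemptyV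
    rcases classify G h0 x with hx | hx | hx
    · exact ⟨x, hx⟩
    · exact ⟨sI (ιT x), (hsI _ (hιT x hx).1.1).1.1⟩
    · exact ⟨sI x, (hsI x hx).1.1⟩
  obtain ⟨x0, hx0⟩ := hSne
  haveI : DecidablePred (SX G) := Classical.decPred _
  let D : DGraph :=
    { V := {x : G.V // SX G x}
      nonemptyV := ⟨⟨x0, hx0⟩⟩
      E := fun a b => G.E a.1 (tI (ι b.1)) }
  let tp : D.V → G.V := fun b => tI (ι b.1)
  have hIι : ∀ b : D.V, IX G (ι b.1) := fun b => (hι b.1 b.2).1.1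
  have hEι : ∀ b : D.V, G.E b.1 (ι b.1) := fun b => (hι b.1 b.2).1.2
  have hTtp : ∀ b : D.V, TX G (tp b) := fun b => (htI _ (hIι b)).1.1
  have hEtp : ∀ b : D.V, G.E (ι b.1) (tp b) := fun b => (htI _ (hIι b)).1.2
  -- characterisation of hatE
  have hatE_iff : ∀ a b : D.V, hatE G a.1 b.1 ↔ D.E a b := by
    intro a b
    constructor
    · rintro ⟨i, t, hIi, hTt, hbi, hit, hat⟩
      have hi : i = ι b.1 := (hι b.1 b.2).2 i hIi hbi
      subst hi
      have ht : t = tI (ι b.1) := (htI _ (hIι b)).2 t hTt hit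
      subst ht
      exact hat
    · intro hE
      exact ⟨ι b.1, tI (ι b.1), hIι b, (htI _ (hIι b)).1.1, hEι b, (htI _ (hIι b)).1.2, hE⟩
  have hslo : IsSLO D.E := by
    refine ⟨?_, ?_, ?_⟩
    · intro a ha
      exact h7 a.1 a.2 ((hatE_iff a a).2 ha)
    · intro a b c hab hbc
      exact (hatE_iff a c).1
        (h8 a.1 b.1 c.1 ⟨a.2, b.2, c.2, (hatE_iff a b).2 hab, (hatE_iff b c).2 hbc⟩)
    · intro a b hne
      have hne' : a.1 ≠ b.1 := fun hh => hne (Subtype.ext hh)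
      rcases h9 a.1 b.1 ⟨a.2, b.2, hne'⟩ with hh | hh
      · exact Or.inl ((hatE_iff a b).1 hh)
      · exact Or.inr ((hatE_iff b a).1 hh)
  have noE : ∀ x y, (P0 G x ↔ P0 G y) → (P1 G x ↔ P1 G y) → ¬ G.E x y :=
    fun x y p q hE => h1 x y hE ⟨p, q⟩
  have tp_inj : Function.Injective tp := by
    intro a b hab
    have h1a : ιT (tI (ι a.1)) = ι a.1 := ιTt _ (hIι a)
    have h1b : ιT (tI (ι b.1)) = ι b.1 := ιTt _ (hIι b)
    have hii : ι a.1 = ι b.1 := by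
      rw [← h1a, ← h1b]
      exact congrArg ιT hab
    have : a.1 = b.1 := by rw [← sι a.1 a.2, ← sι b.1 b.2, hii]
    exact Subtype.ext this
  let g : Gad D.V → G.V := Sum.elim (fun a => a.1) (Sum.elim tp (fun a => ι a.1))
  have hg : Function.Bijective g := by
    constructor
    · rintro (a | a | a) (b | b | b) hab
      · cases Subtype.ext (hab : a.1 = b.1); rfl
      · have h' : a.1 = tp b := hab
        have := a.2.1; rw [h'] at this
        exact absurd this (hTtp b).1
      · have h' : a.1 = ι b.1 := hab
        have := a.2.1; rw [h'] at this
        exact absurd this (hIι b).1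
      · have h' : tp a = b.1 := hab
        have := b.2.1; rw [← h'] at this
        exact absurd this (hTtp a).1
      · cases tp_inj (hab : tp a = tp b); rfl
      · have h' : tp a = ι b.1 := hab
        have := (hTtp a).2; rw [h'] at this
        exact absurd this (hIι b).2
      · have h' : ι a.1 = b.1 := hab
        have := b.2.1; rw [← h'] at this
        exact absurd this (hIι a).1
      · have h' : ι a.1 = tp b := hab
        have := (hTtp b).2; rw [← h'] at this
        exact absurd this (hIι a).2
      · have h'' : ι a.1 = ι b.1 := hab
        have h' : a.1 = b.1 := by rw [← sι a.1 a.2, ← sι b.1 b.2, h'']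
        cases Subtype.ext h'; rfl
    · intro x
      rcases classify G h0 x with hx | hx | hx
      · exact ⟨Sum.inl ⟨x, hx⟩, rfl⟩
      · refine ⟨Sum.inr (Sum.inl ⟨sI (ιT x), (hsI _ (hιT x hx).1.1).1.1⟩), ?_⟩
        show tI (ι (sI (ιT x))) = x
        rw [ιs _ (hιT x hx).1.1, tιT x hx]
      · refine ⟨Sum.inr (Sum.inr ⟨sI x, (hsI x hx).1.1⟩), ?_⟩
        show ι (sI x) = x
        exact ιs x hx
  have key : ∀ p q, G.E (g p) (g q) ↔ gadE D.E p q := by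
    rintro (a | a | a) (b | b | b)
    · show G.E a.1 b.1 ↔ gadE D.E (gs a) (gs b)
      constructor
      · intro hE
        exact absurd hE (noE a.1 b.1 (iff_of_true a.2.1 b.2.1) (iff_of_false a.2.2 b.2.2))
      · intro hE; exact (gE_ss hE).elim
    · show G.E a.1 (tp b) ↔ gadE D.E (gs a) (gt b)
      rw [gE_st]
    · show G.E a.1 (ι b.1) ↔ gadE D.E (gs a) (gi b)
      rw [gE_si]
      constructor
      · intro hE
        have : a.1 = sI (ι b.1) := (hsI _ (hIι b)).2 a.1 a.2 (G.symm _ _ hE)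
        exact Subtype.ext (this.trans (sι b.1 b.2))
      · rintro rfl; exact hEι _
    · show G.E (tp a) b.1 ↔ gadE D.E (gt a) (gs b)
      rw [gadE_comm, gE_st]
      exact ⟨fun hh => G.symm _ _ hh, fun hh => G.symm _ _ hh⟩
    · show G.E (tp a) (tp b) ↔ gadE D.E (gt a) (gt b)
      constructor
      · intro hE
        exact absurd hE
          (noE _ _ (iff_of_false (hTtp a).1 (hTtp b).1) (iff_of_true (hTtp a).2 (hTtp b).2))
      · intro hE; exact (gE_tt hE).elim
    · show G.E (tp a) (ι b.1) ↔ gadE D.E (gt a) (gi b)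
      rw [gadE_comm, gE_it]
      constructor
      · intro hE
        have : tp a = tI (ι b.1) := (htI _ (hIι b)).2 (tp a) (hTtp a) (G.symm _ _ hE)
        exact (tp_inj this).symm
      · rintro rfl; exact G.symm _ _ (hEtp _)
    · show G.E (ι a.1) b.1 ↔ gadE D.E (gi a) (gs b)
      rw [gadE_comm, gE_si]
      constructor
      · intro hE
        have : b.1 = sI (ι a.1) := (hsI _ (hIι a)).2 b.1 b.2 (hE)
        exact Subtype.ext (this.trans (sι a.1 a.2))
      · rintro rfl; exact G.symm _ _ (hEι _)
    · show G.E (ι a.1) (tp b) ↔ gadE D.E (gi a) (gt b)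
      rw [gE_it]
      constructor
      · intro hE
        have h' : tp b = tI (ι a.1) := (htI _ (hIι a)).2 (tp b) (hTtp b) hE
        exact tp_inj (Eq.symm h')
      · rintro rfl; exact hEtp _
    · show G.E (ι a.1) (ι b.1) ↔ gadE D.E (gi a) (gi b)
      constructor
      · intro hE
        exact absurd hE
          (noE _ _ (iff_of_false (hIι a).1 (hIι b).1) (iff_of_false (hIι a).2 (hIι b).2))
      · intro hE; exact (gE_ii hE).elim
  have keyf : ∀ p, G.f (g p) = gadf p := by
    rintro (a | a | a)
    · show G.f a.1 = gadf (gs a)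
      have ha0 : G.f a.1 0 = true := a.2.1
      have ha1 : G.f a.1 1 = false := by
        have := a.2.2; simp only [P1, Bool.not_eq_true] at this; exact this
      funext i; fin_cases i
      · simpa [gadf, gs] using ha0
      · simpa [gadf, gs] using ha1
    · show G.f (tp a) = gadf (gt a)
      have ha0 : G.f (tp a) 0 = false := by
        have := (hTtp a).1; simp only [P0, Bool.not_eq_true] at this; exact this
      have ha1 : G.f (tp a) 1 = true := (hTtp a).2
      funext i; fin_cases i
      · simpa [gadf, gt] using ha0
      · simpa [gadf, gt] using ha1
    · show G.f (ι a.1) = gadf (gi a)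
      have ha0 : G.f (ι a.1) 0 = false := by
        have := (hIι a).1; simp only [P0, Bool.not_eq_true] at this; exact this
      have ha1 : G.f (ι a.1) 1 = false := by
        have := (hIι a).2; simp only [P1, Bool.not_eq_true] at this; exact this
      funext i; fin_cases i
      · simpa [gadf, gi] using ha0
      · simpa [gadf, gi] using ha1
  let e : G.V ≃ Gad D.V := (Equiv.ofBijective g hg).symm
  refine ⟨D, hslo, e, ?_, ?_⟩
  · intro x y
    have hx : g (e x) = x := (Equiv.ofBijective g hg).apply_symm_apply x
    have hy : g (e y) = y := (Equiv.ofBijective g hg).apply_symm_apply y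
    have := key (e x) (e y)
    rw [hx, hy] at this
    exact this
  · intro x
    have hx : g (e x) = x := (Equiv.ofBijective g hg).apply_symm_apply x
    have := keyf (e x)
    rw [hx] at this
    exact this

end S5

namespace S5
open FirstOrder Language

noncomputable def mkEquiv (G : UFG) (D : DGraph) (e : G.V ≃ Gad D.V)
    (hE : ∀ x y, G.E x y ↔ gadE D.E (e x) (e y)) (hf : ∀ x, G.f x = gadf (e x)) :
    G.V ≃[L2] (gadget D).V where
  toEquiv := e
  map_fun' := fun {n} f _ => Empty.elim f
  map_rel' := by
    intro n r x
    cases r with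
    | P k =>
      show (gadget D).f (e (x 0)) k = true ↔ G.f (x 0) k = true
      rw [hf (x 0)]
      exact Iff.rfl
    | E =>
      show (gadget D).E (e (x 0)) (e (x 1)) ↔ G.E (x 0) (x 1)
      exact (hE (x 0) (x 1)).symm

end S5

/-- There is a first-order formula `φ(x)` over the signature
`P₁, P₂, E` such that a pointed `2`-featured undirected graph satisfies `φ` iff
the graph is isomorphic (as a featured graph) to the gadgetisation of a strict
linear order. -/
theorem stmt5 :
    ∃ φ : (GLang 2).Formula (Fin 1),
      ∀ (G : UFG) (v : G.V),
        (letI := ufgStruct G; φ.Realize (fun _ => v)) ↔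
          ∃ D : DGraph, IsSLO D.E ∧
            ∃ e : G.V ≃ Gad D.V,
              (∀ x y, G.E x y ↔ gadE D.E (e x) (e y)) ∧ ∀ x, G.f x = gadf (e x) := by
  refine ⟨S5.phi, fun G v => ?_⟩
  constructor
  · intro hr
    exact S5.phi_to_iso G ((S5.realize_phi G v).1 hr)
  · rintro ⟨D, hslo, e, hE, hf⟩
    have g := S5.mkEquiv G D e hE hf
    have h2 := FirstOrder.Language.StrongHomClass.realize_formula g S5.phi (v := fun _ => v)
    exact h2.1 ((S5.realize_phi (gadget D) (g v)).2 (S5.phi_gadget D hslo))
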